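/- Let L be a number field and R = O_L[1/N] for some natural number N. Let T = Spec(R[x_1,...,x_n]/(f_1,...,f_m)) be an affine scheme of finite type over R. Suppose there are infinitely many maximal ideals 𝔭 of R such that the fiber T_𝔭 has a point over an algebraic closure of the residue field R/𝔭. Then T ×_R Q̄ has a Q̄-point, where Q̄ is an algebraic closure of ℚ. -/

import Mathlib

open Ideal in
lemma extend_to_acf {A B KK : Type*} [CommRing A] [CommRing B] [Algebra A B]
    [Algebra.IsIntegral A B] [Field KK] [IsAlgClosed KK]
    (g : A →+* KK) (hker : RingHom.ker (algebraMap A B) ≤ RingHom.ker g) :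
    ∃ h : B →+* KK, h.comp (algebraMap A B) = g := by
  haveI hP : (RingHom.ker g).IsPrime := RingHom.ker_isPrime g
  obtain ⟨Q, -, hQprime, hQcomap⟩ :=
    Ideal.exists_ideal_over_prime_of_isIntegral (S := B) (RingHom.ker g) ⊥
      (by rw [← RingHom.ker_eq_comap_bot]; exact hker)
  haveI := hQprime
  haveI : Q.LiesOver (RingHom.ker g) := ⟨hQcomap.symm⟩
  letI : Algebra (A ⧸ RingHom.ker g) KK := (RingHom.kerLift g).toAlgebra
  haveI : FaithfulSMul (A ⧸ RingHom.ker g) KK :=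
    (faithfulSMul_iff_algebraMap_injective _ _).mpr (RingHom.kerLift_injective g)
  haveI : Module.IsTorsionFree (A ⧸ RingHom.ker g) (B ⧸ Q) :=
    FaithfulSMul.to_isTorsionFree (A ⧸ RingHom.ker g) (B ⧸ Q)
  let χ : (B ⧸ Q) →ₐ[A ⧸ RingHom.ker g] KK := IsAlgClosed.lift
  refine ⟨χ.toRingHom.comp (Ideal.Quotient.mk Q), ?_⟩
  ext a
  have h1 : (Ideal.Quotient.mk Q) (algebraMap A B a) =
      algebraMap (A ⧸ RingHom.ker g) (B ⧸ Q) (Ideal.Quotient.mk _ a) :=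
    (Ideal.quotientMap_mk (H := hQcomap.ge)).symm
  simp only [RingHom.coe_comp, Function.comp_apply, AlgHom.toRingHom_eq_coe, RingHom.coe_coe]
  rw [h1, χ.commutes]
  exact RingHom.kerLift_mk g a

lemma mv_coeff_lift {σ S T : Type*} [CommRing S] [CommRing T] (g : S →+* T)
    (p : MvPolynomial σ T) (h : ∀ d, p.coeff d ∈ Set.range g) :
    ∃ q : MvPolynomial σ S, MvPolynomial.map g q = p := by
  classical
  choose pre hpre using h
  refine ⟨p.support.sum fun d => MvPolynomial.monomial d (pre d), ?_⟩
  rw [map_sum]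
  conv_rhs => rw [p.as_sum]
  refine Finset.sum_congr rfl fun d _ => ?_
  rw [MvPolynomial.map_monomial, hpre]

set_option maxHeartbeats 2000000 in
set_option synthInstance.maxHeartbeats 1000000 in
/-- Mori's lemma: if an affine scheme of finite type over `O_L[1/N]` has points over
algebraically closed fields with infinitely many distinct maximal residue ideals, then
it has a point over the algebraic closure of `ℚ`. -/
theorem stmt4 (L : Type) [Field L] [NumberField L]
    (N : NumberField.RingOfIntegers L)
    (R : Type) [CommRing R] [Algebra (NumberField.RingOfIntegers L) R]
    [IsLocalization.Away N R]
    (n m : ℕ) (f : Fin m → MvPolynomial (Fin n) R)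
    (ι : Type) [Infinite ι]
    (K : ι → Type) [∀ i, Field (K i)] [∀ i, IsAlgClosed (K i)]
    (ψ : ∀ i, R →+* K i)
    (hmax : ∀ i, (RingHom.ker (ψ i)).IsMaximal)
    (hinj : Function.Injective fun i => RingHom.ker (ψ i))
    (hsol : ∀ i, ∃ x : Fin n → K i,
      ∀ j, MvPolynomial.eval x (MvPolynomial.map (ψ i) (f j)) = 0)
    (φ : R →+* AlgebraicClosure ℚ) :
    ∃ x : Fin n → AlgebraicClosure ℚ,
      ∀ j, MvPolynomial.eval x (MvPolynomial.map φ (f j)) = 0 := by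
  classical
  haveI : IsLocalization (Submonoid.powers N) R := ‹IsLocalization.Away N R›
  haveI hRnt : Nontrivial R :=
    ⟨⟨1, 0, fun h => one_ne_zero (α := (AlgebraicClosure ℚ)) (by rw [← map_one φ, h, map_zero])⟩⟩
  have hN : N ≠ 0 := by
    intro hN0
    have hu := IsLocalization.map_units (M := Submonoid.powers N) R
      ⟨N, Submonoid.mem_powers N⟩
    rw [hN0, map_zero] at hu
    exact not_isUnit_zero hu
  have hle : Submonoid.powers N ≤ nonZeroDivisors (NumberField.RingOfIntegers L) :=
    powers_le_nonZeroDivisors_of_noZeroDivisors hN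
  haveI : IsDomain R := IsLocalization.isDomain_of_le_nonZeroDivisors (R := NumberField.RingOfIntegers L) (S := R) hle
  haveI : IsDedekindDomain R := IsLocalization.isDedekindDomain (A := NumberField.RingOfIntegers L) hle R
  have hORinj : Function.Injective (algebraMap (NumberField.RingOfIntegers L) R) := IsLocalization.injective R hle
  haveI : CharZero R := charZero_of_injective_algebraMap hORinj
  haveI : CharZero (AlgebraicClosure ℚ) :=
    charZero_of_injective_algebraMap (algebraMap ℚ (AlgebraicClosure ℚ)).injective
  haveI : Algebra.IsAlgebraic ℚ L := NumberField.isAlgebraic L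
  -- φ is injective
  have hφ : Function.Injective φ := by
    rw [injective_iff_map_eq_zero]
    intro x hx
    by_contra hx0
    obtain ⟨⟨a, s⟩, ha⟩ := IsLocalization.surj (Submonoid.powers N) x
    have ha0 : a ≠ 0 := by
      rintro rfl
      rw [map_zero] at ha
      exact hx0 (((IsLocalization.map_units R s).mul_left_eq_zero).mp ha)
    have haL : algebraMap (NumberField.RingOfIntegers L) L a ≠ 0 := fun h =>
      ha0 (IsFractionRing.injective (NumberField.RingOfIntegers L) L (by rw [h, map_zero]))
    have halg : IsAlgebraic ℤ (algebraMap (NumberField.RingOfIntegers L) L a)⁻¹ :=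
      (IsFractionRing.isAlgebraic_iff ℤ ℚ L).mpr (Algebra.IsAlgebraic.isAlgebraic _)
    obtain ⟨w, d, hd0, hwd⟩ : ∃ (w : integralClosure ℤ L) (d : ℤ), d ≠ 0 ∧
        algebraMap ℤ L d * (algebraMap (NumberField.RingOfIntegers L) L a)⁻¹ = w := by
      obtain ⟨y, hy0, hy⟩ := halg.exists_integral_multiple
      exact ⟨⟨_, hy⟩, y, hy0, (Algebra.smul_def y _).symm⟩
    obtain ⟨w', hw'⟩ := (IsIntegralClosure.isIntegral_iff (A := NumberField.RingOfIntegers L) (R := ℤ) (B := L)).mp w.2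
    have key : algebraMap (NumberField.RingOfIntegers L) L (w' * a) = algebraMap ℤ L d := by
      rw [map_mul, hw', ← hwd, mul_assoc, inv_mul_cancel₀ haL, mul_one]
    have key2 : w' * a = (d : NumberField.RingOfIntegers L) := by
      apply IsFractionRing.injective (NumberField.RingOfIntegers L) L
      rw [key, map_intCast, eq_intCast]
    have h2 : algebraMap (NumberField.RingOfIntegers L) R (w' * a) = (d : R) := by rw [key2, map_intCast]
    have hzero : φ ((d : R)) = 0 := by
      rw [← h2, map_mul, ← ha, map_mul φ, map_mul φ, hx]
      ring
    rw [map_intCast] at hzero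
    exact hd0 (by exact_mod_cast hzero)
  -- main argument
  by_contra hcon
  push_neg at hcon
  set J' : Ideal (MvPolynomial (Fin n) (AlgebraicClosure ℚ)) :=
    Ideal.span (Set.range fun j => (f j).map φ) with hJ'
  have hJtop : J' = ⊤ := by
    by_contra hne
    have h0 : MvPolynomial.zeroLocus (AlgebraicClosure ℚ) J' = ∅ := by
      rw [Set.eq_empty_iff_forall_notMem]
      intro x hxmem
      obtain ⟨j, hj⟩ := hcon x
      exact hj ((MvPolynomial.mem_zeroLocus_iff.mp hxmem) _ (Ideal.subset_span ⟨j, rfl⟩))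
    have hrad := MvPolynomial.vanishingIdeal_zeroLocus_eq_radical (K := AlgebraicClosure ℚ) J'
    rw [h0] at hrad
    have htop : MvPolynomial.vanishingIdeal (AlgebraicClosure ℚ) (∅ : Set (Fin n → (AlgebraicClosure ℚ))) = ⊤ := by
      rw [eq_top_iff]
      intro p _
      rw [MvPolynomial.mem_vanishingIdeal_iff]
      rintro x ⟨⟩
    rw [htop] at hrad
    exact hne (Ideal.radical_eq_top.mp hrad.symm)
  have h1 : (1 : MvPolynomial (Fin n) (AlgebraicClosure ℚ)) ∈ J' := hJtop ▸ Submodule.mem_top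
  obtain ⟨g, hg⟩ := (Submodule.mem_span_range_iff_exists_fun _).mp h1
  simp_rw [smul_eq_mul] at hg
  -- the finite set of coefficients
  set cs : Finset (AlgebraicClosure ℚ) :=
    Finset.univ.biUnion (fun j : Fin m => (g j).support.image fun d => (g j).coeff d) with hcs
  have key : ∀ α : (AlgebraicClosure ℚ), ∃ d : ℤ, d ≠ 0 ∧ IsIntegral ℤ ((d : (AlgebraicClosure ℚ)) * α) := by
    intro α
    have halg : IsAlgebraic ℤ α :=
      (IsFractionRing.isAlgebraic_iff ℤ ℚ (AlgebraicClosure ℚ)).mpr ((@AlgebraicClosure.isAlgebraic ℚ _).isAlgebraic α)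
    obtain ⟨w, d, hd0, hwd⟩ : ∃ (w : integralClosure ℤ (AlgebraicClosure ℚ)) (d : ℤ), d ≠ 0 ∧
        algebraMap ℤ (AlgebraicClosure ℚ) d * α = w := by
      obtain ⟨y, hy0, hy⟩ := halg.exists_integral_multiple
      exact ⟨⟨_, hy⟩, y, hy0, (Algebra.smul_def y _).symm⟩
    refine ⟨d, hd0, ?_⟩
    have hcast : ((d : (AlgebraicClosure ℚ))) = algebraMap ℤ (AlgebraicClosure ℚ) d := (eq_intCast (algebraMap ℤ (AlgebraicClosure ℚ)) d).symm
    rw [hcast, hwd]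
    exact w.2
  choose dd hdd0 hddint using key
  set c : ℤ := ∏ α ∈ cs, dd α with hc
  have hc0 : c ≠ 0 := Finset.prod_ne_zero_iff.mpr fun α _ => hdd0 α
  have hcR0 : ((c : R)) ≠ 0 := Int.cast_ne_zero.mpr hc0
  -- choose a good index i
  have hex : ∃ i, (c : R) ∉ RingHom.ker (ψ i) := by
    by_contra hall
    push_neg at hall
    have hspan : Ideal.span {(c : R)} ≠ ⊥ := by
      simpa [Ideal.span_singleton_eq_bot] using hcR0
    have hfin := Ideal.finite_factors (I := Ideal.span {(c : R)}) hspan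
    haveI := hfin.to_subtype
    let v : ι → IsDedekindDomain.HeightOneSpectrum R := fun i =>
      ⟨RingHom.ker (ψ i), (hmax i).isPrime,
        fun hb => hcR0 (Ideal.mem_bot.mp (hb ▸ hall i))⟩
    have hvmem : ∀ i, v i ∈ {w : IsDedekindDomain.HeightOneSpectrum R |
        w.asIdeal ∣ Ideal.span {(c : R)}} := fun i =>
      (Ideal.dvd_iff_le).mpr (Ideal.span_le.mpr (Set.singleton_subset_iff.mpr (hall i)))
    have hinj2 : Function.Injective (fun i => (⟨v i, hvmem i⟩ :
        {w : IsDedekindDomain.HeightOneSpectrum R | w.asIdeal ∣ Ideal.span {(c : R)}})) := by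
      intro i1 i2 h12
      apply hinj
      exact congrArg (fun t => t.1.asIdeal) h12
    haveI : Finite ι := Finite.of_injective _ hinj2
    exact not_finite ι
  obtain ⟨i, hi⟩ := hex
  obtain ⟨x, hx⟩ := hsol i
  -- localize away from c
  set R' := Localization.Away ((c : R)) with hR'
  have huK : IsUnit (ψ i ((c : R))) :=
    isUnit_iff_ne_zero.mpr (fun h => hi (RingHom.mem_ker.mpr h))
  set ψ' : R' →+* K i := IsLocalization.Away.lift ((c : R)) huK with hψ'
  have hψ'eq : ∀ r : R, ψ' (algebraMap R R' r) = ψ i r := fun r =>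
    IsLocalization.Away.lift_eq ((c : R)) huK r
  have huQ : IsUnit (φ ((c : R))) := by
    rw [map_intCast]
    exact isUnit_iff_ne_zero.mpr (Int.cast_ne_zero.mpr hc0)
  set φ'' : R' →+* (AlgebraicClosure ℚ) := IsLocalization.Away.lift ((c : R)) huQ with hφ''
  have hφ''eq : ∀ r : R, φ'' (algebraMap R R' r) = φ r := fun r =>
    IsLocalization.Away.lift_eq ((c : R)) huQ r
  have hφ''inj : Function.Injective φ'' := by
    rw [injective_iff_map_eq_zero]
    intro z hz0
    obtain ⟨⟨r, s⟩, hrs⟩ := IsLocalization.surj (Submonoid.powers ((c : R))) z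
    have hr : φ r = 0 := by rw [← hφ''eq r, ← hrs, map_mul, hz0, zero_mul]
    have hr0 : r = 0 := hφ (by rw [hr, map_zero])
    rw [hr0, map_zero] at hrs
    exact ((IsLocalization.map_units R' s).mul_left_eq_zero).mp hrs
  letI : Algebra R' (AlgebraicClosure ℚ) := φ''.toAlgebra
  haveI := IsScalarTower.of_algebraMap_eq' (R := ℤ) (S := R') (A := AlgebraicClosure ℚ)
    (RingHom.ext_int _ _)
  set S := integralClosure R' (AlgebraicClosure ℚ) with hSdef
  -- the inverse of c in R'
  obtain ⟨U, hU⟩ := IsLocalization.map_units R'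
    (⟨(c : R), Submonoid.mem_powers _⟩ : Submonoid.powers ((c : R)))
  have hcinv : φ'' ((U⁻¹ : R'ˣ) : R') * (c : (AlgebraicClosure ℚ)) = 1 := by
    have h1 : φ'' ((U : R'ˣ) : R') = (c : (AlgebraicClosure ℚ)) := by
      rw [hU]
      show φ'' (algebraMap R R' ((c : ℤ) : R)) = (c : (AlgebraicClosure ℚ))
      rw [hφ''eq, map_intCast]
    rw [← h1, ← map_mul, Units.inv_mul, map_one]
  -- all coefficients of g j are integral over R'
  have hcoefS : ∀ (j : Fin m) (d : Fin n →₀ ℕ), (g j).coeff d ∈ S := by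
    intro j d
    by_cases hd : d ∈ (g j).support
    · have hmem : (g j).coeff d ∈ cs :=
        Finset.mem_biUnion.mpr ⟨j, Finset.mem_univ j,
          Finset.mem_image.mpr ⟨d, hd, rfl⟩⟩
      set α := (g j).coeff d with hα
      obtain ⟨e, he⟩ := Finset.dvd_prod_of_mem dd hmem
      have hrw : α = ((dd α : (AlgebraicClosure ℚ)) * α) * ((e : (AlgebraicClosure ℚ)) * φ'' ((U⁻¹ : R'ˣ) : R')) := by
        have : ((dd α : (AlgebraicClosure ℚ)) * (e : (AlgebraicClosure ℚ))) = (c : (AlgebraicClosure ℚ)) := by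
          rw [← Int.cast_mul, ← he]
        calc α = ((c : (AlgebraicClosure ℚ)) * (φ'' ((U⁻¹ : R'ˣ) : R'))) * α := by
                rw [mul_comm (c : (AlgebraicClosure ℚ)), hcinv, one_mul]
          _ = ((dd α : (AlgebraicClosure ℚ)) * α) * ((e : (AlgebraicClosure ℚ)) * φ'' ((U⁻¹ : R'ˣ) : R')) := by
                rw [← this]; ring
      have t1 : IsIntegral R' ((dd α : (AlgebraicClosure ℚ)) * α) := (hddint α).tower_top
      have t2 : IsIntegral R' ((e : (AlgebraicClosure ℚ)) * φ'' ((U⁻¹ : R'ˣ) : R')) := by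
        have : (e : (AlgebraicClosure ℚ)) * φ'' ((U⁻¹ : R'ˣ) : R') =
            algebraMap R' (AlgebraicClosure ℚ) ((algebraMap ℤ R' e) * ((U⁻¹ : R'ˣ) : R')) := by
          rw [map_mul]
          congr 1
          rw [← IsScalarTower.algebraMap_apply ℤ R' (AlgebraicClosure ℚ), eq_intCast]
        rw [this]
        exact isIntegral_algebraMap
      show IsIntegral R' α
      rw [hrw]
      exact t1.mul t2
    · rw [MvPolynomial.notMem_support_iff.mp hd]
      exact zero_mem S
  -- lift the identity to S
  set Sval : ↥S →+* (AlgebraicClosure ℚ) := S.toSubring.subtype with hSval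
  have hSvalinj : Function.Injective Sval := Subtype.val_injective
  have hq : ∀ j : Fin m, ∃ q, MvPolynomial.map Sval q = g j := fun j =>
    mv_coeff_lift Sval (g j) (fun d => ⟨⟨_, hcoefS j d⟩, rfl⟩)
  choose g' hg' using hq
  set φS : R →+* ↥S := (algebraMap R' ↥S).comp (algebraMap R R') with hφS
  have hval : ∀ z : R', Sval (algebraMap R' ↥S z) = φ'' z := fun z => rfl
  have hφSval : ∀ r : R, Sval (φS r) = φ r := fun r => by
    rw [hφS, RingHom.comp_apply, hval, hφ''eq]
  have hid : (∑ j, g' j * (f j).map φS) = 1 := by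
    apply MvPolynomial.map_injective Sval hSvalinj
    rw [map_sum, map_one, ← hg]
    refine Finset.sum_congr rfl fun j _ => ?_
    have hc2 : Sval.comp φS = φ := RingHom.ext hφSval
    rw [map_mul, hg' j, MvPolynomial.map_map, hc2]
  -- extend ψ' to S
  have halgSinj : Function.Injective (algebraMap R' ↥S) := fun a b hab =>
    hφ''inj (by rw [← hval a, ← hval b, hab])
  obtain ⟨χ, hχ⟩ := extend_to_acf (B := ↥S) ψ'
    (by rw [(RingHom.injective_iff_ker_eq_bot _).mp halgSinj]; exact bot_le)
  -- conclude
  have hcomp : χ.comp φS = ψ i := by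
    ext r
    rw [hφS, ← RingHom.comp_assoc, hχ]
    exact hψ'eq r
  have final := congrArg (MvPolynomial.eval x) (congrArg (MvPolynomial.map χ) hid)
  rw [map_one, map_one, map_sum, map_sum] at final
  have hterm : ∀ j ∈ Finset.univ, MvPolynomial.eval x
      (MvPolynomial.map χ (g' j * (f j).map φS)) = 0 := by
    intro j _
    rw [map_mul, map_mul, MvPolynomial.map_map, hcomp, hx j, mul_zero]
  rw [Finset.sum_eq_zero hterm] at final
  exact zero_ne_one final
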